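/- Let η = μx + νy + κz + ϖt + γ with ν ≠ 0 and ϖ = −3μκ/ν + μ³. Then u = 2∂_x(ln(1 + e^{η})) is a solution of the (3+1)-dimensional generalized BKP equation u_{ty} − u_{xxxy} − 3(u_x u_y)_x + 3u_{xz} = 0. -/

import Mathlib

/-- Partial derivative in the first variable. -/
noncomputable def px (u : ℝ → ℝ → ℝ → ℝ → ℝ) : ℝ → ℝ → ℝ → ℝ → ℝ :=
  fun x y z t => deriv (fun s => u s y z t) x

/-- Partial derivative in the second variable. -/
noncomputable def py (u : ℝ → ℝ → ℝ → ℝ → ℝ) : ℝ → ℝ → ℝ → ℝ → ℝ :=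
  fun x y z t => deriv (fun s => u x s z t) y

/-- Partial derivative in the third variable. -/
noncomputable def pz (u : ℝ → ℝ → ℝ → ℝ → ℝ) : ℝ → ℝ → ℝ → ℝ → ℝ :=
  fun x y z t => deriv (fun s => u x y s t) z

/-- Partial derivative in the fourth variable. -/
noncomputable def pt (u : ℝ → ℝ → ℝ → ℝ → ℝ) : ℝ → ℝ → ℝ → ℝ → ℝ :=
  fun x y z t => deriv (fun s => u x y z s) t

noncomputable def G0 (μ h : ℝ) : ℝ := 2*μ*Real.exp h/(1+Real.exp h)
noncomputable def G1 (μ h : ℝ) : ℝ := 2*μ*Real.exp h/(1+Real.exp h)^2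
noncomputable def G2 (μ h : ℝ) : ℝ := 2*μ*(Real.exp h*(1-Real.exp h))/(1+Real.exp h)^3
noncomputable def G3 (μ h : ℝ) : ℝ := 2*μ*(Real.exp h*(1-4*Real.exp h+Real.exp h^2))/(1+Real.exp h)^4
noncomputable def G4 (μ h : ℝ) : ℝ := 2*μ*(Real.exp h*(1-11*Real.exp h+11*Real.exp h^2-Real.exp h^3))/(1+Real.exp h)^5

lemma hderiv_eq {f : ℝ → ℝ} {a b x : ℝ} (h : HasDerivAt f a x) (hab : b = a) :
    HasDerivAt f b x := hab ▸ h

lemma hG0 (μ h : ℝ) : HasDerivAt (G0 μ) (G1 μ h) h := by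
  have e := Real.hasDerivAt_exp h
  have hne : ((1:ℝ)+Real.exp h) ≠ 0 := by positivity
  exact hderiv_eq ((e.const_mul (2*μ)).div (e.const_add 1) hne)
    (by unfold G1; field_simp; ring)

lemma hG1 (μ h : ℝ) : HasDerivAt (G1 μ) (G2 μ h) h := by
  have e := Real.hasDerivAt_exp h
  have hne : ((1:ℝ)+Real.exp h)^2 ≠ 0 := by positivity
  have hne1 : ((1:ℝ)+Real.exp h) ≠ 0 := by positivity
  exact hderiv_eq ((e.const_mul (2*μ)).div ((e.const_add 1).pow 2) hne)
    (by unfold G2; field_simp; ring)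

lemma hG2 (μ h : ℝ) : HasDerivAt (G2 μ) (G3 μ h) h := by
  have e := Real.hasDerivAt_exp h
  have hne : ((1:ℝ)+Real.exp h)^3 ≠ 0 := by positivity
  have hne1 : ((1:ℝ)+Real.exp h) ≠ 0 := by positivity
  exact hderiv_eq (((e.mul (e.const_sub 1)).const_mul (2*μ)).div ((e.const_add 1).pow 3) hne)
    (by unfold G3; simp only [Pi.mul_apply, Pi.add_apply, Pi.pow_apply]; field_simp; ring)

lemma hG3 (μ h : ℝ) : HasDerivAt (G3 μ) (G4 μ h) h := by
  have e := Real.hasDerivAt_exp h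
  have hne : ((1:ℝ)+Real.exp h)^4 ≠ 0 := by positivity
  have hne1 : ((1:ℝ)+Real.exp h) ≠ 0 := by positivity
  exact hderiv_eq (((e.mul (((e.const_mul 4).const_sub 1).add (e.pow 2))).const_mul (2*μ)).div
      ((e.const_add 1).pow 4) hne)
    (by unfold G4; simp only [Pi.mul_apply, Pi.add_apply, Pi.pow_apply]; field_simp; ring)

lemma deriv_comp' (f f' : ℝ → ℝ) (hf : ∀ h, HasDerivAt f (f' h) h) (g : ℝ → ℝ)
    (a x : ℝ) (hg : HasDerivAt g a x) :
    deriv (fun s => f (g s)) x = f' (g x) * a :=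
  ((hf (g x)).comp x hg).deriv
lemma hEtaX (μ ν κ ϖ γ y z t x : ℝ) :
    HasDerivAt (fun s => μ*s+ν*y+κ*z+ϖ*t+γ) μ x := by
  simpa using ((((((hasDerivAt_id x).const_mul μ).add_const (ν*y)).add_const (κ*z)).add_const (ϖ*t)).add_const γ)

lemma hEtaY (μ ν κ ϖ γ x z t y : ℝ) :
    HasDerivAt (fun s => μ*x+ν*s+κ*z+ϖ*t+γ) ν y := by
  simpa using (((((((hasDerivAt_id y).const_mul ν).const_add (μ*x)).add_const (κ*z)).add_const (ϖ*t)).add_const γ))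

lemma hEtaZ (μ ν κ ϖ γ x y t z : ℝ) :
    HasDerivAt (fun s => μ*x+ν*y+κ*s+ϖ*t+γ) κ z := by
  simpa using (((((((hasDerivAt_id z).const_mul κ).const_add (μ*x+ν*y)).add_const (ϖ*t)).add_const γ)))

lemma hEtaT (μ ν κ ϖ γ x y z t : ℝ) :
    HasDerivAt (fun s => μ*x+ν*y+κ*z+ϖ*s+γ) ϖ t := by
  simpa using ((((((hasDerivAt_id t).const_mul ϖ).const_add (μ*x+ν*y+κ*z)).add_const γ)))

theorem one_soliton_solves_bkp (μ ν κ γ ϖ : ℝ) (hν : ν ≠ 0)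
    (hϖ : ϖ = -3 * μ * κ / ν + μ ^ 3)
    (u : ℝ → ℝ → ℝ → ℝ → ℝ)
    (hu : u = fun x y z t =>
      2 * deriv (fun s => Real.log (1 + Real.exp (μ * s + ν * y + κ * z + ϖ * t + γ))) x) :
    ∀ x y z t : ℝ,
      py (pt u) x y z t - py (px (px (px u))) x y z t
        - 3 * px (fun x y z t => px u x y z t * py u x y z t) x y z t
        + 3 * pz (px u) x y z t = 0 := by
  have hu' : u = fun x y z t => G0 μ (μ*x+ν*y+κ*z+ϖ*t+γ) := by
    rw [hu]; funext x y z t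
    have hne : ((1:ℝ)+Real.exp (μ*x+ν*y+κ*z+ϖ*t+γ)) ≠ 0 := by positivity
    have hlog : HasDerivAt (fun s => Real.log (1 + Real.exp (μ*s+ν*y+κ*z+ϖ*t+γ)))
        ((Real.exp (μ*x+ν*y+κ*z+ϖ*t+γ) * μ) / (1 + Real.exp (μ*x+ν*y+κ*z+ϖ*t+γ))) x := by
      have he : HasDerivAt (fun s => Real.exp (μ*s+ν*y+κ*z+ϖ*t+γ))
          (Real.exp (μ*x+ν*y+κ*z+ϖ*t+γ) * μ) x :=
        (Real.hasDerivAt_exp _).comp x (hEtaX μ ν κ ϖ γ y z t x)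
      exact (he.const_add 1).log hne
    rw [hlog.deriv]; unfold G0; field_simp
  -- first partials
  have pxu : px u = fun x y z t => μ * G1 μ (μ*x+ν*y+κ*z+ϖ*t+γ) := by
    funext x y z t
    show deriv (fun s => u s y z t) x = _
    rw [hu']
    rw [deriv_comp' (G0 μ) (G1 μ) (hG0 μ) _ μ x (hEtaX μ ν κ ϖ γ y z t x)]
    ring
  have pyu : py u = fun x y z t => ν * G1 μ (μ*x+ν*y+κ*z+ϖ*t+γ) := by
    funext x y z t
    show deriv (fun s => u x s z t) y = _
    rw [hu']
    rw [deriv_comp' (G0 μ) (G1 μ) (hG0 μ) _ ν y (hEtaY μ ν κ ϖ γ x z t y)]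
    ring
  have ptu : pt u = fun x y z t => ϖ * G1 μ (μ*x+ν*y+κ*z+ϖ*t+γ) := by
    funext x y z t
    show deriv (fun s => u x y z s) t = _
    rw [hu']
    rw [deriv_comp' (G0 μ) (G1 μ) (hG0 μ) _ ϖ t (hEtaT μ ν κ ϖ γ x y z t)]
    ring
  have pypt : py (pt u) = fun x y z t => ϖ * (ν * G2 μ (μ*x+ν*y+κ*z+ϖ*t+γ)) := by
    funext x y z t
    show deriv (fun s => pt u x s z t) y = _
    rw [ptu]
    rw [deriv_comp' (fun h => ϖ * G1 μ h) (fun h => ϖ * G2 μ h)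
      (fun h => (hG1 μ h).const_mul ϖ) _ ν y (hEtaY μ ν κ ϖ γ x z t y)]
    ring
  have pxxu : px (px u) = fun x y z t => μ * (μ * G2 μ (μ*x+ν*y+κ*z+ϖ*t+γ)) := by
    funext x y z t
    show deriv (fun s => px u s y z t) x = _
    rw [pxu]
    rw [deriv_comp' (fun h => μ * G1 μ h) (fun h => μ * G2 μ h)
      (fun h => (hG1 μ h).const_mul μ) _ μ x (hEtaX μ ν κ ϖ γ y z t x)]
    ring
  have pxxxu : px (px (px u)) = fun x y z t => μ * (μ * (μ * G3 μ (μ*x+ν*y+κ*z+ϖ*t+γ))) := by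
    funext x y z t
    show deriv (fun s => px (px u) s y z t) x = _
    rw [pxxu]
    rw [deriv_comp' (fun h => μ * (μ * G2 μ h)) (fun h => μ * (μ * G3 μ h))
      (fun h => ((hG2 μ h).const_mul μ).const_mul μ) _ μ x (hEtaX μ ν κ ϖ γ y z t x)]
    ring
  have pyxxx : py (px (px (px u))) = fun x y z t =>
      ν * (μ * (μ * (μ * G4 μ (μ*x+ν*y+κ*z+ϖ*t+γ)))) := by
    funext x y z t
    show deriv (fun s => px (px (px u)) x s z t) y = _
    rw [pxxxu]
    rw [deriv_comp' (fun h => μ * (μ * (μ * G3 μ h))) (fun h => μ * (μ * (μ * G4 μ h)))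
      (fun h => (((hG3 μ h).const_mul μ).const_mul μ).const_mul μ) _ ν y
      (hEtaY μ ν κ ϖ γ x z t y)]
    ring
  have pzpx : pz (px u) = fun x y z t => κ * (μ * G2 μ (μ*x+ν*y+κ*z+ϖ*t+γ)) := by
    funext x y z t
    show deriv (fun s => px u x y s t) z = _
    rw [pxu]
    rw [deriv_comp' (fun h => μ * G1 μ h) (fun h => μ * G2 μ h)
      (fun h => (hG1 μ h).const_mul μ) _ κ z (hEtaZ μ ν κ ϖ γ x y t z)]
    ring
  have pxw : px (fun x y z t => px u x y z t * py u x y z t) = fun x y z t =>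
      μ * ((μ * G2 μ (μ*x+ν*y+κ*z+ϖ*t+γ)) * (ν * G1 μ (μ*x+ν*y+κ*z+ϖ*t+γ))
        + (μ * G1 μ (μ*x+ν*y+κ*z+ϖ*t+γ)) * (ν * G2 μ (μ*x+ν*y+κ*z+ϖ*t+γ))) := by
    funext x y z t
    show deriv (fun s => px u s y z t * py u s y z t) x = _
    rw [pxu, pyu]
    rw [deriv_comp' (fun h => (μ * G1 μ h) * (ν * G1 μ h))
      (fun h => (μ * G2 μ h) * (ν * G1 μ h) + (μ * G1 μ h) * (ν * G2 μ h))
      (fun h => ((hG1 μ h).const_mul μ).mul ((hG1 μ h).const_mul ν)) _ μ x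
      (hEtaX μ ν κ ϖ γ y z t x)]
    ring
  intro x y z t
  rw [pypt, pyxxx, pxw, pzpx]
  simp only [G1, G2, G4]
  set E := Real.exp (μ*x+ν*y+κ*z+ϖ*t+γ) with hEdef
  have hEpos : 0 < E := Real.exp_pos _
  have h1 : (1:ℝ) + E ≠ 0 := by positivity
  rw [hϖ]
  field_simp
  ring
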